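/- If 𝒯 = (𝒳, π, 𝒮) and 𝒯' = (𝒳', π', 𝒮') are disjoint hypergraph transformations (i.e., every hypergraph in 𝒮 ∪ π(𝒮) is vertex disjoint from every hypergraph in 𝒮' ∪ π'(𝒮')), then for every hypergraph X in the intersection of the domains of π' ∘ π and π ∘ π', we have π'(π(X)) = π(π'(X)). -/

import Mathlib

open Classical

universe u

/-- A (finite) hypergraph over a vertex universe `V`: a finite vertex set together with a
finite set of nonempty hyperedges, each a subset of the vertex set. -/
structure FinHypergraph (V : Type u) where
  verts : Set V
  edges : Set (Set V)
  verts_finite : verts.Finite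
  edges_finite : edges.Finite
  edge_sub : ∀ e ∈ edges, e ⊆ verts
  edge_nonempty : ∀ e ∈ edges, e.Nonempty

namespace FinHypergraph

variable {V : Type u}

/-- The null hypergraph `𝒩`. -/
def Null : FinHypergraph V :=
  ⟨∅, ∅, Set.finite_empty, Set.finite_empty, by simp, by simp⟩

/-- Direct sum (hypergraph union) of two hypergraphs. -/
def dSum (X Y : FinHypergraph V) : FinHypergraph V where
  verts := X.verts ∪ Y.verts
  edges := X.edges ∪ Y.edges
  verts_finite := X.verts_finite.union Y.verts_finite
  edges_finite := X.edges_finite.union Y.edges_finite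
  edge_sub := by
    rintro e (he | he)
    · exact (X.edge_sub e he).trans Set.subset_union_left
    · exact (Y.edge_sub e he).trans Set.subset_union_right
  edge_nonempty := by
    rintro e (he | he)
    · exact X.edge_nonempty e he
    · exact Y.edge_nonempty e he

/-- Direct sum of a set of (pairwise disjoint) hypergraphs; the null hypergraph when the
unions fail to be finite.  The direct sum of the empty set is the null hypergraph. -/
noncomputable def bigSum (A : Set (FinHypergraph V)) : FinHypergraph V :=
  if h : (⋃ X ∈ A, X.verts).Finite ∧ (⋃ X ∈ A, X.edges).Finite then
    { verts := ⋃ X ∈ A, X.verts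
      edges := ⋃ X ∈ A, X.edges
      verts_finite := h.1
      edges_finite := h.2
      edge_sub := by
        intro e he
        simp only [Set.mem_iUnion] at he
        obtain ⟨X, hX, heX⟩ := he
        intro v hv
        simp only [Set.mem_iUnion]
        exact ⟨X, hX, X.edge_sub e heX hv⟩
      edge_nonempty := by
        intro e he
        simp only [Set.mem_iUnion] at he
        obtain ⟨X, hX, heX⟩ := he
        exact X.edge_nonempty e heX }
  else Null

/-- The direct difference `X ⊖ Z`: the unique hypergraph `W` vertex disjoint from `Z`
with `X = W ⊕ Z`, when it exists. -/
noncomputable def dDiff (X Z : FinHypergraph V) : FinHypergraph V :=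
  if h : ∃ W : FinHypergraph V, Disjoint W.verts Z.verts ∧ X = dSum W Z then h.choose else X

/-- Two vertices are connected in `X` if there is a walk between them. -/
def Connected (X : FinHypergraph V) (a b : V) : Prop :=
  a ∈ X.verts ∧ Relation.ReflTransGen (fun u w => ∃ e ∈ X.edges, u ∈ e ∧ w ∈ e) a b

/-- `C` is a connected component of `X`: its vertex set is a connectivity class of `X`
and its edges are the edges of `X` lying inside it. -/
def IsComponent (X C : FinHypergraph V) : Prop :=
  (∃ v ∈ X.verts, C.verts = {w | Connected X v w}) ∧
  C.edges = {e ∈ X.edges | e ⊆ C.verts}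

/-- The set `𝒞(X)` of connected components of `X`. -/
def comps (X : FinHypergraph V) : Set (FinHypergraph V) := {C | IsComponent X C}

/-- Component disjointness: `𝒞(X) ∩ 𝒞(Y) = ∅`. -/
def CompDisjoint (X Y : FinHypergraph V) : Prop := comps X ∩ comps Y = ∅

/-- `X ∧ H`: the union (direct sum) of the components of `X` meeting some hyperedge in `H`. -/
noncomputable def wedge (X : FinHypergraph V) (H : Set (Set V)) : FinHypergraph V :=
  bigSum {C ∈ comps X | ∃ f ∈ H, (f ∩ C.verts).Nonempty}

/-- `𝒮` is component maximal in `𝒳` with `𝒮`-maximal subsets given by `D`. -/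
def IsMaximalSubsets (dom S : Set (FinHypergraph V))
    (D : FinHypergraph V → Set (FinHypergraph V)) : Prop :=
  ∀ X ∈ dom,
    D X ⊆ S ∧
    (D X).Pairwise CompDisjoint ∧
    (Null ∈ S → Null ∈ D X) ∧
    (∀ T ∈ D X, comps T ⊆ comps X) ∧
    (∀ s ∈ S, comps s ⊆ comps X → ∃ T ∈ D X, comps s ⊆ comps T)

/-- `𝒮_X := { S ∈ 𝒟_X | V(π(S)) ∩ V(X ⊖ S) = ∅ }`. -/
noncomputable def SXof (π : FinHypergraph V → FinHypergraph V)
    (D : FinHypergraph V → Set (FinHypergraph V)) (X : FinHypergraph V) : Set (FinHypergraph V) :=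
  {s ∈ D X | Disjoint (π s).verts (dDiff X s).verts}

/-- `(𝒳, π, 𝒮)` (with `𝒮`-maximal subsets `D`) is a hypergraph transformation:
nonredundancy, component maximality, and preservation of the direct sum decomposition. -/
def IsHGT (dom : Set (FinHypergraph V)) (π : FinHypergraph V → FinHypergraph V)
    (S : Set (FinHypergraph V)) (D : FinHypergraph V → Set (FinHypergraph V)) : Prop :=
  (∀ s ∈ S, comps s ∩ comps (π s) = ∅) ∧
  (Null ∈ S → π Null ≠ Null) ∧
  IsMaximalSubsets dom S D ∧
  ∀ X ∈ dom,
    (π '' SXof π D X).Pairwise (fun A B => Disjoint A.verts B.verts) ∧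
    Set.InjOn π (SXof π D X) ∧
    π X = dSum (dDiff X (bigSum (SXof π D X))) (bigSum (π '' SXof π D X))

/-- `𝒮'` is upward closed with respect to `𝒮`. -/
def UpwardClosed (S' S : Set (FinHypergraph V)) : Prop :=
  ∀ s ∈ S', ∀ t ∈ S, comps s ⊆ comps t → t ∈ S'

end FinHypergraph


namespace FinHypergraph

variable {V : Type u}

theorem hg_ext {X Y : FinHypergraph V} (hv : X.verts = Y.verts) (he : X.edges = Y.edges) :
    X = Y := by
  cases X; cases Y; simp_all

lemma connected_mem {X : FinHypergraph V} {v w : V} (h : Connected X v w) : w ∈ X.verts := by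
  obtain ⟨hv, h⟩ := h
  induction h with
  | refl => exact hv
  | tail _ step ih => obtain ⟨e, he, _, hwe⟩ := step; exact X.edge_sub e he hwe

lemma connected_refl {X : FinHypergraph V} {v : V} (h : v ∈ X.verts) : Connected X v v :=
  ⟨h, Relation.ReflTransGen.refl⟩

lemma connected_symm {X : FinHypergraph V} {v w : V} (h : Connected X v w) : Connected X w v :=
  ⟨connected_mem h,
    by
      haveI : Std.Symm (fun u w : V => ∃ e ∈ X.edges, u ∈ e ∧ w ∈ e) :=
        ⟨fun _ _ hab => by obtain ⟨e, he, h1, h2⟩ := hab; exact ⟨e, he, h2, h1⟩⟩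
      exact Std.Symm.symm _ _ h.2⟩

lemma connected_trans {X : FinHypergraph V} {u v w : V} (h1 : Connected X u v)
    (h2 : Connected X v w) : Connected X u w :=
  ⟨h1.1, h1.2.trans h2.2⟩

/-- The connected component of `v` in `X`. -/
def compOf (X : FinHypergraph V) (v : V) : FinHypergraph V where
  verts := {w | Connected X v w}
  edges := {e | e ∈ X.edges ∧ e ⊆ {w | Connected X v w}}
  verts_finite := X.verts_finite.subset fun _ hw => connected_mem hw
  edges_finite := X.edges_finite.subset fun _ he => he.1
  edge_sub := fun _ he => he.2
  edge_nonempty := fun e he => X.edge_nonempty e he.1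

lemma mem_compOf_self {X : FinHypergraph V} {v : V} (hv : v ∈ X.verts) :
    v ∈ (compOf X v).verts := connected_refl hv

lemma compOf_mem_comps {X : FinHypergraph V} {v : V} (hv : v ∈ X.verts) :
    compOf X v ∈ comps X := ⟨⟨v, hv, rfl⟩, rfl⟩

lemma comps_eq_compOf {X C : FinHypergraph V} (hC : C ∈ comps X) :
    ∃ v ∈ X.verts, C = compOf X v := by
  obtain ⟨⟨v, hv, hverts⟩, hedges⟩ := hC
  refine ⟨v, hv, hg_ext hverts ?_⟩
  rw [hedges, hverts]; rfl

lemma compOf_eq {X : FinHypergraph V} {v w : V} (h : Connected X v w) :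
    compOf X v = compOf X w := by
  have hvs : {u | Connected X v u} = {u | Connected X w u} :=
    Set.ext fun u => ⟨fun h1 => connected_trans (connected_symm h) h1,
      fun h1 => connected_trans h h1⟩
  refine hg_ext hvs ?_
  show {e | e ∈ X.edges ∧ e ⊆ {u | Connected X v u}} = _
  rw [hvs]; rfl

lemma comps_eq_of_meet {X C K : FinHypergraph V} (hC : C ∈ comps X) (hK : K ∈ comps X)
    (h : (C.verts ∩ K.verts).Nonempty) : C = K := by
  obtain ⟨v, hv, rfl⟩ := comps_eq_compOf hC
  obtain ⟨w, hw, rfl⟩ := comps_eq_compOf hK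
  obtain ⟨u, hu1, hu2⟩ := h
  exact (compOf_eq hu1).trans (compOf_eq hu2).symm

lemma verts_eq_iUnion (X : FinHypergraph V) : X.verts = ⋃ C ∈ comps X, C.verts := by
  ext v; constructor
  · intro hv; exact Set.mem_biUnion (compOf_mem_comps hv) (mem_compOf_self hv)
  · intro hv
    obtain ⟨C, hC, hvC⟩ := Set.mem_iUnion₂.1 hv
    obtain ⟨w, _, rfl⟩ := comps_eq_compOf hC
    exact connected_mem hvC

lemma edges_eq_iUnion (X : FinHypergraph V) : X.edges = ⋃ C ∈ comps X, C.edges := by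
  ext e; constructor
  · intro he
    obtain ⟨v, hv⟩ := X.edge_nonempty e he
    have hvX := X.edge_sub e he hv
    exact Set.mem_biUnion (compOf_mem_comps hvX)
      ⟨he, fun w hw => ⟨hvX, Relation.ReflTransGen.single ⟨e, he, hv, hw⟩⟩⟩
  · intro he
    obtain ⟨C, hC, heC⟩ := Set.mem_iUnion₂.1 he
    obtain ⟨w, _, rfl⟩ := comps_eq_compOf hC
    exact heC.1

lemma verts_sub_of_comps {X C : FinHypergraph V} (hC : C ∈ comps X) : C.verts ⊆ X.verts := by
  obtain ⟨v, _, rfl⟩ := comps_eq_compOf hC; exact fun w hw => connected_mem hw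

lemma edges_sub_of_comps {X C : FinHypergraph V} (hC : C ∈ comps X) : C.edges ⊆ X.edges := by
  obtain ⟨v, _, rfl⟩ := comps_eq_compOf hC; exact fun e he => he.1

lemma eq_of_comps_eq {X Y : FinHypergraph V} (h : comps X = comps Y) : X = Y :=
  hg_ext (by rw [verts_eq_iUnion, verts_eq_iUnion, h])
    (by rw [edges_eq_iUnion, edges_eq_iUnion, h])

lemma eq_null_of_comps_eq_empty {X : FinHypergraph V} (h : comps X = ∅) : X = Null :=
  hg_ext (by rw [verts_eq_iUnion, h]; simp [Null])
    (by rw [edges_eq_iUnion, h]; simp [Null])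

lemma comps_nonempty_verts {X C : FinHypergraph V} (hC : C ∈ comps X) : C.verts.Nonempty := by
  obtain ⟨v, hv, rfl⟩ := comps_eq_compOf hC; exact ⟨v, connected_refl hv⟩

lemma comps_finite (X : FinHypergraph V) : (comps X).Finite := by
  have h1 : ((fun C : FinHypergraph V => C.verts) '' comps X).Finite :=
    (X.verts_finite.finite_subsets).subset (by rintro _ ⟨C, hC, rfl⟩; exact verts_sub_of_comps hC)
  refine Set.Finite.of_finite_image h1 ?_
  intro C hC K hK h
  obtain ⟨v, hv⟩ := comps_nonempty_verts hC
  have h' : C.verts = K.verts := h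
  exact comps_eq_of_meet hC hK ⟨v, hv, h' ▸ hv⟩

/-- `s` is a union of connected components of `Y` (in a weak, pointwise sense). -/
def IsPart (Y s : FinHypergraph V) : Prop :=
  s.verts ⊆ Y.verts ∧ s.edges ⊆ Y.edges ∧
  ∀ C ∈ comps Y, (C.verts ∩ s.verts).Nonempty → C.verts ⊆ s.verts ∧ C.edges ⊆ s.edges

lemma isPart_of_comps_sub {Y s : FinHypergraph V} (h : comps s ⊆ comps Y) : IsPart Y s := by
  refine ⟨?_, ?_, ?_⟩
  · rw [verts_eq_iUnion s]; exact Set.iUnion₂_subset fun C hC => verts_sub_of_comps (h hC)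
  · rw [edges_eq_iUnion s]; exact Set.iUnion₂_subset fun C hC => edges_sub_of_comps (h hC)
  · rintro C hC ⟨v, hvC, hvs⟩
    have hK : compOf s v ∈ comps s := compOf_mem_comps hvs
    have hCK : C = compOf s v := comps_eq_of_meet hC (h hK) ⟨v, hvC, mem_compOf_self hvs⟩
    rw [hCK]
    exact ⟨verts_sub_of_comps hK, edges_sub_of_comps hK⟩

lemma dSum_cancel {Y s W W' : FinHypergraph V} (h1 : Disjoint W.verts s.verts) (h2 : Y = dSum W s)
    (h1' : Disjoint W'.verts s.verts) (h2' : Y = dSum W' s) : W = W' := by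
  have key : ∀ U : FinHypergraph V, Disjoint U.verts s.verts → Y = dSum U s →
      U.verts = Y.verts \ s.verts ∧ U.edges = Y.edges \ s.edges := by
    intro U hd hY
    have hv : Y.verts = U.verts ∪ s.verts := congrArg verts hY
    have he : Y.edges = U.edges ∪ s.edges := congrArg edges hY
    have hedis : Disjoint U.edges s.edges := by
      rw [Set.disjoint_left]; intro e heU hes
      obtain ⟨x, hx⟩ := U.edge_nonempty e heU
      exact hd.ne_of_mem (U.edge_sub e heU hx) (s.edge_sub e hes hx) rfl
    rw [hv, he, Set.union_diff_right, Set.union_diff_right,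
      hd.sdiff_eq_left, hedis.sdiff_eq_left]
    exact ⟨rfl, rfl⟩
  obtain ⟨v1, e1⟩ := key W h1 h2
  obtain ⟨v2, e2⟩ := key W' h1' h2'
  exact hg_ext (v1.trans v2.symm) (e1.trans e2.symm)

lemma exists_dDiff_witness {Y s : FinHypergraph V} (h : IsPart Y s) :
    ∃ W : FinHypergraph V, Disjoint W.verts s.verts ∧ Y = dSum W s := by
  obtain ⟨hv, he, hcl⟩ := h
  refine ⟨⟨Y.verts \ s.verts, Y.edges \ s.edges, Y.verts_finite.diff, Y.edges_finite.diff,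
    ?_, fun e he' => Y.edge_nonempty e he'.1⟩, Set.disjoint_sdiff_left, ?_⟩
  · rintro e ⟨heY, hes⟩ x hx
    refine ⟨Y.edge_sub e heY hx, fun hxs => ?_⟩
    have hC := compOf_mem_comps (X := Y) (Y.edge_sub e heY hx)
    obtain ⟨_, hedgesub⟩ := hcl _ hC ⟨x, mem_compOf_self (Y.edge_sub e heY hx), hxs⟩
    refine hes (hedgesub ⟨heY, fun w hw => ?_⟩)
    exact ⟨Y.edge_sub e heY hx, Relation.ReflTransGen.single ⟨e, heY, hx, hw⟩⟩
  · exact hg_ext (Set.diff_union_of_subset hv).symm (Set.diff_union_of_subset he).symm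

lemma dDiff_spec {Y s : FinHypergraph V} (h : IsPart Y s) :
    (dDiff Y s).verts = Y.verts \ s.verts ∧ (dDiff Y s).edges = Y.edges \ s.edges := by
  have hex := exists_dDiff_witness h
  obtain ⟨W0, hW01, hW02⟩ := hex
  have hex' : ∃ W : FinHypergraph V, Disjoint W.verts s.verts ∧ Y = dSum W s := ⟨W0, hW01, hW02⟩
  have hspec := hex'.choose_spec
  have heq : hex'.choose = W0 := dSum_cancel hspec.1 hspec.2 hW01 hW02
  rw [dDiff, dif_pos hex', heq]
  have hv : Y.verts = W0.verts ∪ s.verts := congrArg verts hW02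
  have he : Y.edges = W0.edges ∪ s.edges := congrArg edges hW02
  have hedis : Disjoint W0.edges s.edges := by
    rw [Set.disjoint_left]; intro e heU hes
    obtain ⟨x, hx⟩ := W0.edge_nonempty e heU
    exact hW01.ne_of_mem (W0.edge_sub e heU hx) (s.edge_sub e hes hx) rfl
  rw [hv, he, Set.union_diff_right, Set.union_diff_right,
    hW01.sdiff_eq_left, hedis.sdiff_eq_left]
  exact ⟨rfl, rfl⟩

lemma dDiff_decomp {Y s : FinHypergraph V} (h : IsPart Y s) :
    Y = dSum (dDiff Y s) s ∧ Disjoint (dDiff Y s).verts s.verts := by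
  obtain ⟨hv, he⟩ := dDiff_spec h
  constructor
  · refine hg_ext ?_ ?_
    · show Y.verts = (dDiff Y s).verts ∪ s.verts
      rw [hv, Set.diff_union_of_subset h.1]
    · show Y.edges = (dDiff Y s).edges ∪ s.edges
      rw [he, Set.diff_union_of_subset h.2.1]
  · rw [hv]; exact Set.disjoint_sdiff_left

lemma connected_dSum {W U : FinHypergraph V} (hWU : Disjoint W.verts U.verts) {v w : V}
    (hv : v ∈ W.verts) : Connected (dSum W U) v w ↔ Connected W v w := by
  constructor
  · rintro ⟨_, h⟩
    have key : w ∈ W.verts ∧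
        Relation.ReflTransGen (fun u w => ∃ e ∈ W.edges, u ∈ e ∧ w ∈ e) v w := by
      induction h with
      | refl => exact ⟨hv, Relation.ReflTransGen.refl⟩
      | tail _ step ih =>
        obtain ⟨hbW, hRT⟩ := ih
        obtain ⟨e, he, hbe, hce⟩ := step
        rcases he with heW | heU
        · exact ⟨W.edge_sub e heW hce, hRT.tail ⟨e, heW, hbe, hce⟩⟩
        · exact absurd rfl (hWU.ne_of_mem hbW (U.edge_sub e heU hbe))
    exact ⟨hv, key.2⟩
  · rintro ⟨_, h⟩
    refine ⟨Or.inl hv, Relation.ReflTransGen.mono ?_ _ _ h⟩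
    rintro a b ⟨e, he, h1, h2⟩
    exact ⟨e, Or.inl he, h1, h2⟩

lemma compOf_dSum {W U : FinHypergraph V} (hWU : Disjoint W.verts U.verts) {v : V}
    (hv : v ∈ W.verts) : compOf (dSum W U) v = compOf W v := by
  have hvs : {w | Connected (dSum W U) v w} = {w | Connected W v w} :=
    Set.ext fun w => connected_dSum hWU hv
  refine hg_ext hvs ?_
  show {e | e ∈ (dSum W U).edges ∧ e ⊆ {w | Connected (dSum W U) v w}}
      = {e | e ∈ W.edges ∧ e ⊆ {w | Connected W v w}}
  rw [hvs]
  ext e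
  simp only [Set.mem_setOf_eq]
  constructor
  · rintro ⟨he, hsub⟩
    rcases he with heW | heU
    · exact ⟨heW, hsub⟩
    · exfalso
      obtain ⟨x, hx⟩ := U.edge_nonempty e heU
      have hxW : x ∈ W.verts := connected_mem (hsub hx)
      exact hWU.ne_of_mem hxW (U.edge_sub e heU hx) rfl
  · rintro ⟨heW, hsub⟩
    exact ⟨Or.inl heW, hsub⟩

lemma comps_dSum_iff {W U K : FinHypergraph V} (hWU : Disjoint W.verts U.verts)
    (hK : Disjoint K.verts U.verts) : K ∈ comps (dSum W U) ↔ K ∈ comps W := by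
  constructor
  · intro h
    obtain ⟨v, hv, rfl⟩ := comps_eq_compOf h
    have hv2 := hv
    have hvW : v ∈ W.verts := by
      rcases hv2 with hvW | hvU
      · exact hvW
      · exact absurd rfl (hK.ne_of_mem (mem_compOf_self hv) hvU)
    rw [compOf_dSum hWU hvW]
    exact compOf_mem_comps hvW
  · intro h
    obtain ⟨v, hv, rfl⟩ := comps_eq_compOf h
    rw [← compOf_dSum hWU hv]
    exact compOf_mem_comps (Or.inl hv)

lemma bigSum_spec {A : Set (FinHypergraph V)} (hA : A.Finite) :
    (bigSum A).verts = ⋃ X ∈ A, X.verts ∧ (bigSum A).edges = ⋃ X ∈ A, X.edges := by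
  have h1 : (⋃ X ∈ A, X.verts).Finite := hA.biUnion fun X _ => X.verts_finite
  have h2 : (⋃ X ∈ A, X.edges).Finite := hA.biUnion fun X _ => X.edges_finite
  rw [bigSum, dif_pos ⟨h1, h2⟩]
  exact ⟨rfl, rfl⟩

lemma isPart_bigSum {Y : FinHypergraph V} {A : Set (FinHypergraph V)} (hA : A.Finite)
    (h : ∀ s ∈ A, IsPart Y s) : IsPart Y (bigSum A) := by
  obtain ⟨hv, he⟩ := bigSum_spec hA
  rw [IsPart, hv, he]
  refine ⟨Set.iUnion₂_subset fun s hs => (h s hs).1,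
    Set.iUnion₂_subset fun s hs => (h s hs).2.1, ?_⟩
  rintro C hC ⟨x, hxC, hxA⟩
  obtain ⟨s, hs, hxs⟩ := Set.mem_iUnion₂.1 hxA
  obtain ⟨g1, g2⟩ := (h s hs).2.2 C hC ⟨x, hxC, hxs⟩
  exact ⟨g1.trans (Set.subset_biUnion_of_mem hs), g2.trans (Set.subset_biUnion_of_mem hs)⟩

/-- Maximal elements of `S` below `X` (componentwise). -/
def MaxIn (S : Set (FinHypergraph V)) (X t : FinHypergraph V) : Prop :=
  t ∈ S ∧ comps t ⊆ comps X ∧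
    ∀ t' ∈ S, comps t' ⊆ comps X → comps t ⊆ comps t' → t = t'

lemma T_finite (S : Set (FinHypergraph V)) (X : FinHypergraph V) :
    {t ∈ S | comps t ⊆ comps X}.Finite := by
  refine Set.Finite.of_finite_image ?_ (fun a _ b _ h => eq_of_comps_eq h)
  exact ((comps_finite X).finite_subsets).subset (by rintro _ ⟨t, ht, rfl⟩; exact ht.2)

lemma exists_maxIn {S : Set (FinHypergraph V)} {X t : FinHypergraph V} (ht : t ∈ S)
    (hc : comps t ⊆ comps X) : ∃ m, MaxIn S X m ∧ comps t ⊆ comps m := by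
  obtain ⟨m, hm, hmax⟩ := Set.Finite.exists_maximalFor (fun t => comps t)
    {t' ∈ S | comps t' ⊆ comps X ∧ comps t ⊆ comps t'}
    ((T_finite S X).subset (by rintro u ⟨hu1, hu2, _⟩; exact ⟨hu1, hu2⟩))
    ⟨t, ht, hc, subset_rfl⟩
  refine ⟨m, ⟨hm.1, hm.2.1, ?_⟩, hm.2.2⟩
  intro t' ht' hc' hsub
  exact eq_of_comps_eq (le_antisymm hsub (hmax ⟨ht', hc', hm.2.2.trans hsub⟩ hsub))

lemma D_eq_maxIn {dom S : Set (FinHypergraph V)} {D : FinHypergraph V → Set (FinHypergraph V)}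
    (hM : IsMaximalSubsets dom S D) {X : FinHypergraph V} (hX : X ∈ dom) :
    D X = {t | MaxIn S X t ∨ (t = Null ∧ Null ∈ S)} := by
  obtain ⟨hDS, hpw, hnull, hsub, hmax5⟩ := hM X hX
  ext u
  simp only [Set.mem_setOf_eq]
  constructor
  · intro hu
    by_cases hun : u = Null
    · exact Or.inr ⟨hun, hun ▸ hDS hu⟩
    · left
      obtain ⟨m, hmMax, hum⟩ := exists_maxIn (hDS hu) (hsub u hu)
      obtain ⟨T, hT, hmT⟩ := hmax5 m hmMax.1 hmMax.2.1
      have hmT' : m = T := hmMax.2.2 T (hDS hT) (hsub T hT) hmT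
      by_cases huT : u = T
      · have : u = m := huT.trans hmT'.symm
        exact this ▸ hmMax
      · exfalso
        have hdisj : comps u ∩ comps T = ∅ := hpw hu hT huT
        apply hun
        apply eq_null_of_comps_eq_empty
        rw [Set.eq_empty_iff_forall_notMem]
        intro C hC
        have : C ∈ comps u ∩ comps T := ⟨hC, hmT' ▸ hum hC⟩
        rw [hdisj] at this
        exact this
  · rintro (hMax | ⟨rfl, hNS⟩)
    · obtain ⟨T, hT, hmT⟩ := hmax5 u hMax.1 hMax.2.1
      have : u = T := hMax.2.2 T (hDS hT) (hsub T hT) hmT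
      exact this ▸ hT
    · exact hnull hNS

lemma D_eq_of_comps_iff {dom S : Set (FinHypergraph V)} {D : FinHypergraph V → Set (FinHypergraph V)}
    (hM : IsMaximalSubsets dom S D) {X Y : FinHypergraph V} (hX : X ∈ dom) (hY : Y ∈ dom)
    (h : ∀ t ∈ S, (comps t ⊆ comps X ↔ comps t ⊆ comps Y)) : D X = D Y := by
  rw [D_eq_maxIn hM hX, D_eq_maxIn hM hY]
  ext u
  simp only [Set.mem_setOf_eq]
  constructor <;> rintro (⟨g1, g2, g3⟩ | g4)
  · exact Or.inl ⟨g1, (h u g1).1 g2, fun t' ht' hc hs => g3 t' ht' ((h t' ht').2 hc) hs⟩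
  · exact Or.inr g4
  · exact Or.inl ⟨g1, (h u g1).2 g2, fun t' ht' hc hs => g3 t' ht' ((h t' ht').1 hc) hs⟩
  · exact Or.inr g4

lemma D_finite {dom S : Set (FinHypergraph V)} {D : FinHypergraph V → Set (FinHypergraph V)}
    (hM : IsMaximalSubsets dom S D) {X : FinHypergraph V} (hX : X ∈ dom) : (D X).Finite :=
  (T_finite S X).subset fun u hu => ⟨(hM X hX).1 hu, (hM X hX).2.2.2.1 u hu⟩

lemma edge_disjoint_of_verts {E F : Set (Set V)} {P Q : Set V}
    (hE : ∀ e ∈ E, e ⊆ P ∧ e.Nonempty) (hF : ∀ e ∈ F, e ⊆ Q) (h : Disjoint P Q) :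
    Disjoint E F := by
  rw [Set.disjoint_left]
  intro e heE heF
  obtain ⟨hsub, x, hx⟩ := hE e heE
  exact h.ne_of_mem (hsub hx) (hF e heF hx) rfl

lemma set_shuffle {α : Type*} {Xs Bv Uv B'v U'v : Set α} (h1 : Disjoint Uv B'v)
    (h2 : Disjoint U'v Bv) :
    (((Xs \ Bv) ∪ Uv) \ B'v) ∪ U'v = (((Xs \ B'v) ∪ U'v) \ Bv) ∪ Uv := by
  have h1' := Set.disjoint_left.1 h1
  have h2' := Set.disjoint_left.1 h2
  ext x
  simp only [Set.mem_union, Set.mem_diff]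
  constructor
  · rintro (⟨⟨hx1, hx2⟩ | hu, hb'⟩ | hu')
    · exact Or.inl ⟨Or.inl ⟨hx1, hb'⟩, hx2⟩
    · exact Or.inr hu
    · exact Or.inl ⟨Or.inr hu', h2' hu'⟩
  · rintro (⟨⟨hx1, hx2⟩ | hu', hb⟩ | hu)
    · exact Or.inl ⟨Or.inl ⟨hx1, hb⟩, hx2⟩
    · exact Or.inr hu'
    · exact Or.inl ⟨Or.inr hu, h1' hu⟩

section Transfer

variable {dom S : Set (FinHypergraph V)} {π : FinHypergraph V → FinHypergraph V}
  {D : FinHypergraph V → Set (FinHypergraph V)}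

/-- Core decomposition facts for `π X`. -/
lemma key_facts (hT : IsHGT dom π S D) {X : FinHypergraph V} (hX : X ∈ dom) :
    ((π X).verts = (X.verts \ ⋃ s ∈ SXof π D X, s.verts) ∪ ⋃ s ∈ SXof π D X, (π s).verts) ∧
    ((π X).edges = (X.edges \ ⋃ s ∈ SXof π D X, s.edges) ∪ ⋃ s ∈ SXof π D X, (π s).edges) ∧
    (∀ K : FinHypergraph V, (∀ s ∈ S, Disjoint K.verts s.verts) →
      (∀ s ∈ S, Disjoint K.verts (π s).verts) → (K ∈ comps (π X) ↔ K ∈ comps X)) := by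
  obtain ⟨hnr, hnn, hM, hform⟩ := hT
  obtain ⟨hDS, hpw, hnull, hcsub, hmax5⟩ := hM X hX
  obtain ⟨hpwd, hinj, heq⟩ := hform X hX
  set A := SXof π D X with hA
  have hAD : A ⊆ D X := fun s hs => hs.1
  have hAfin : A.Finite := (D_finite hM hX).subset hAD
  have hAS : ∀ s ∈ A, s ∈ S := fun s hs => hDS (hAD hs)
  have hApart : ∀ s ∈ A, IsPart X s := fun s hs => isPart_of_comps_sub (hcsub s (hAD hs))
  have hBpart : IsPart X (bigSum A) := isPart_bigSum hAfin hApart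
  obtain ⟨hBv, hBe⟩ := bigSum_spec hAfin
  have hUfin : (π '' A).Finite := hAfin.image π
  obtain ⟨hUv, hUe⟩ := bigSum_spec hUfin
  have hUv' : (bigSum (π '' A)).verts = ⋃ s ∈ A, (π s).verts := by
    rw [hUv, Set.biUnion_image]
  have hUe' : (bigSum (π '' A)).edges = ⋃ s ∈ A, (π s).edges := by
    rw [hUe, Set.biUnion_image]
  obtain ⟨hWv, hWe⟩ := dDiff_spec hBpart
  -- Disjoint W U
  have hWU : Disjoint (dDiff X (bigSum A)).verts (bigSum (π '' A)).verts := by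
    rw [hWv, hUv', Set.disjoint_iUnion₂_right]
    intro s hs
    have hds : Disjoint (π s).verts (dDiff X s).verts := hs.2
    have hXs : (dDiff X s).verts = X.verts \ s.verts := (dDiff_spec (hApart s hs)).1
    rw [hXs] at hds
    refine (hds.symm.mono_left ?_)
    rw [hBv]
    exact Set.diff_subset_diff_right (Set.subset_biUnion_of_mem hs)
  refine ⟨?_, ?_, ?_⟩
  · rw [heq]
    show (dDiff X (bigSum A)).verts ∪ (bigSum (π '' A)).verts = _
    rw [hWv, hUv', hBv]
  · rw [heq]
    show (dDiff X (bigSum A)).edges ∪ (bigSum (π '' A)).edges = _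
    rw [hWe, hUe', hBe]
  · intro K hKS hKπS
    have hKU : Disjoint K.verts (bigSum (π '' A)).verts := by
      rw [hUv', Set.disjoint_iUnion₂_right]
      exact fun s hs => hKπS s (hAS s hs)
    have hKB : Disjoint K.verts (bigSum A).verts := by
      rw [hBv, Set.disjoint_iUnion₂_right]
      exact fun s hs => hKS s (hAS s hs)
    have step1 : K ∈ comps (π X) ↔ K ∈ comps (dDiff X (bigSum A)) := by
      rw [heq]; exact comps_dSum_iff hWU hKU
    have hXdecomp := dDiff_decomp hBpart
    have step2 : K ∈ comps X ↔ K ∈ comps (dDiff X (bigSum A)) := by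
      conv_lhs => rw [hXdecomp.1]
      exact comps_dSum_iff hXdecomp.2 hKB
    rw [step1, step2]

end Transfer

lemma dSum_verts (X Y : FinHypergraph V) : (dSum X Y).verts = X.verts ∪ Y.verts := rfl

lemma dSum_edges (X Y : FinHypergraph V) : (dSum X Y).edges = X.edges ∪ Y.edges := rfl

lemma comps_sub_iff_transfer {dom S : Set (FinHypergraph V)} {π : FinHypergraph V → FinHypergraph V}
    {D : FinHypergraph V → Set (FinHypergraph V)} (hT : IsHGT dom π S D)
    {S' : Set (FinHypergraph V)} {π' : FinHypergraph V → FinHypergraph V}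
    (hdisj : ∀ A ∈ S ∪ π '' S, ∀ B ∈ S' ∪ π' '' S', Disjoint A.verts B.verts)
    {X : FinHypergraph V} (hX : X ∈ dom) {t : FinHypergraph V} (ht : t ∈ S') :
    comps t ⊆ comps (π X) ↔ comps t ⊆ comps X := by
  have key := (key_facts hT hX).2.2
  have hiff : ∀ K ∈ comps t, (K ∈ comps (π X) ↔ K ∈ comps X) := by
    intro K hK
    have hKt : K.verts ⊆ t.verts := verts_sub_of_comps hK
    refine key K ?_ ?_
    · intro s hs
      exact ((hdisj s (Or.inl hs) t (Or.inl ht)).symm).mono_left hKt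
    · intro s hs
      exact ((hdisj (π s) (Or.inr ⟨s, hs, rfl⟩) t (Or.inl ht)).symm).mono_left hKt
  exact ⟨fun h K hK => (hiff K hK).1 (h hK), fun h K hK => (hiff K hK).2 (h hK)⟩

lemma SX_transfer {dom S dom' S' : Set (FinHypergraph V)}
    {π π' : FinHypergraph V → FinHypergraph V}
    {D D' : FinHypergraph V → Set (FinHypergraph V)}
    (hT : IsHGT dom π S D) (hT' : IsHGT dom' π' S' D')
    (hdisj : ∀ A ∈ S ∪ π '' S, ∀ B ∈ S' ∪ π' '' S', Disjoint A.verts B.verts)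
    {X : FinHypergraph V} (h1 : X ∈ dom) (h2 : π X ∈ dom') (h3 : X ∈ dom') :
    SXof π' D' (π X) = SXof π' D' X := by
  have hM' := hT'.2.2.1
  have hDD : D' (π X) = D' X :=
    D_eq_of_comps_iff hM' h2 h3 (fun t ht => comps_sub_iff_transfer hT hdisj h1 ht)
  have hDS' := (hM' X h3).1
  have hcsub' := (hM' X h3).2.2.2.1
  ext s
  simp only [SXof, Set.mem_setOf_eq, hDD]
  refine and_congr_right fun hs => ?_
  have hsS' : s ∈ S' := hDS' hs
  have hcX : comps s ⊆ comps X := hcsub' s hs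
  have hcpX : comps s ⊆ comps (π X) := (comps_sub_iff_transfer hT hdisj h1 hsS').2 hcX
  have dv1 : (dDiff X s).verts = X.verts \ s.verts := (dDiff_spec (isPart_of_comps_sub hcX)).1
  have dv2 : (dDiff (π X) s).verts = (π X).verts \ s.verts :=
    (dDiff_spec (isPart_of_comps_sub hcpX)).1
  have pv := (key_facts hT h1).1
  have hAS : ∀ u ∈ SXof π D X, u ∈ S := fun u hu => (hT.2.2.1 X h1).1 hu.1
  have hd1 : Disjoint (π' s).verts (⋃ u ∈ SXof π D X, u.verts) := by
    rw [Set.disjoint_iUnion₂_right]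
    exact fun u hu => (hdisj u (Or.inl (hAS u hu)) (π' s) (Or.inr ⟨s, hsS', rfl⟩)).symm
  have hd2 : Disjoint (π' s).verts (⋃ u ∈ SXof π D X, (π u).verts) := by
    rw [Set.disjoint_iUnion₂_right]
    exact fun u hu =>
      (hdisj (π u) (Or.inr ⟨u, hAS u hu, rfl⟩) (π' s) (Or.inr ⟨s, hsS', rfl⟩)).symm
  rw [dv1, dv2, pv]
  constructor
  · intro h
    have hsup : X.verts \ s.verts ⊆
        ((((X.verts \ ⋃ u ∈ SXof π D X, u.verts) ∪ ⋃ u ∈ SXof π D X, (π u).verts) \ s.verts)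
          ∪ ⋃ u ∈ SXof π D X, u.verts) := by
      intro x hx
      by_cases hxB : x ∈ ⋃ u ∈ SXof π D X, u.verts
      · exact Or.inr hxB
      · exact Or.inl ⟨Or.inl ⟨hx.1, hxB⟩, hx.2⟩
    exact (Disjoint.union_right h hd1).mono_right hsup
  · intro h
    have hsup : (((X.verts \ ⋃ u ∈ SXof π D X, u.verts) ∪ ⋃ u ∈ SXof π D X, (π u).verts)
        \ s.verts) ⊆ (X.verts \ s.verts) ∪ ⋃ u ∈ SXof π D X, (π u).verts := by
      rintro x ⟨hx1 | hx2, hxs⟩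
      · exact Or.inl ⟨hx1.1, hxs⟩
      · exact Or.inr hx2
    exact (Disjoint.union_right h hd2).mono_right hsup

end FinHypergraph

open FinHypergraph

theorem stmt11 {V : Type u} (dom dom' S S' : Set (FinHypergraph V))
    (π π' : FinHypergraph V → FinHypergraph V)
    (D D' : FinHypergraph V → Set (FinHypergraph V))
    (hsub : S ⊆ dom) (hsub' : S' ⊆ dom')
    (hT : IsHGT dom π S D) (hT' : IsHGT dom' π' S' D')
    (hdisj : ∀ A ∈ S ∪ π '' S, ∀ B ∈ S' ∪ π' '' S', Disjoint A.verts B.verts)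
    (X : FinHypergraph V)
    (h1 : X ∈ dom) (h2 : π X ∈ dom') (h3 : X ∈ dom') (h4 : π' X ∈ dom) :
    π' (π X) = π (π' X) := by
  have hdisj2 : ∀ A ∈ S' ∪ π' '' S', ∀ B ∈ S ∪ π '' S, Disjoint A.verts B.verts :=
    fun A hA B hB => (hdisj B hB A hA).symm
  have hM := hT.2.2.1
  have hM' := hT'.2.2.1
  have hSX1 : SXof π' D' (π X) = SXof π' D' X := SX_transfer hT hT' hdisj h1 h2 h3
  have hSX2 : SXof π D (π' X) = SXof π D X := SX_transfer hT' hT hdisj2 h3 h4 h1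
  have hASfin : (SXof π D X).Finite := (D_finite hM h1).subset fun s hs => hs.1
  have hAS'fin : (SXof π' D' X).Finite := (D_finite hM' h3).subset fun s hs => hs.1
  have hASS : ∀ s ∈ SXof π D X, s ∈ S := fun s hs => (hM X h1).1 hs.1
  have hAS'S' : ∀ s ∈ SXof π' D' X, s ∈ S' := fun s hs => (hM' X h3).1 hs.1
  have hcs : ∀ s ∈ SXof π D X, comps s ⊆ comps X := fun s hs => (hM X h1).2.2.2.1 s hs.1
  have hcs' : ∀ s ∈ SXof π' D' X, comps s ⊆ comps X := fun s hs => (hM' X h3).2.2.2.1 s hs.1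
  have hcsp' : ∀ s ∈ SXof π D X, comps s ⊆ comps (π' X) :=
    fun s hs => (comps_sub_iff_transfer hT' hdisj2 h3 (hASS s hs)).2 (hcs s hs)
  have hcs'p : ∀ s ∈ SXof π' D' X, comps s ⊆ comps (π X) :=
    fun s hs => (comps_sub_iff_transfer hT hdisj h1 (hAS'S' s hs)).2 (hcs' s hs)
  have keyX := key_facts hT h1
  have keyX' := key_facts hT' h3
  have hform1 := (hT'.2.2.2 (π X) h2).2.2
  rw [hSX1] at hform1
  have hform2 := (hT.2.2.2 (π' X) h4).2.2
  rw [hSX2] at hform2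
  obtain ⟨hB'v, hB'e⟩ := bigSum_spec hAS'fin
  obtain ⟨hBv, hBe⟩ := bigSum_spec hASfin
  obtain ⟨hU'v0, hU'e0⟩ := bigSum_spec (hAS'fin.image π')
  obtain ⟨hUv0, hUe0⟩ := bigSum_spec (hASfin.image π)
  have hU'v : (bigSum (π' '' SXof π' D' X)).verts = ⋃ s ∈ SXof π' D' X, (π' s).verts := by
    rw [hU'v0, Set.biUnion_image]
  have hU'e : (bigSum (π' '' SXof π' D' X)).edges = ⋃ s ∈ SXof π' D' X, (π' s).edges := by
    rw [hU'e0, Set.biUnion_image]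
  have hUv : (bigSum (π '' SXof π D X)).verts = ⋃ s ∈ SXof π D X, (π s).verts := by
    rw [hUv0, Set.biUnion_image]
  have hUe : (bigSum (π '' SXof π D X)).edges = ⋃ s ∈ SXof π D X, (π s).edges := by
    rw [hUe0, Set.biUnion_image]
  have hpart1 : IsPart (π X) (bigSum (SXof π' D' X)) :=
    isPart_bigSum hAS'fin fun s hs => isPart_of_comps_sub (hcs'p s hs)
  have hpart2 : IsPart (π' X) (bigSum (SXof π D X)) :=
    isPart_bigSum hASfin fun s hs => isPart_of_comps_sub (hcsp' s hs)
  obtain ⟨hd1v, hd1e⟩ := dDiff_spec hpart1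
  obtain ⟨hd2v, hd2e⟩ := dDiff_spec hpart2
  have hdUB' : Disjoint (⋃ s ∈ SXof π D X, (π s).verts) (⋃ s ∈ SXof π' D' X, s.verts) := by
    rw [Set.disjoint_iUnion₂_left]
    intro s hs
    rw [Set.disjoint_iUnion₂_right]
    intro u hu
    exact hdisj (π s) (Or.inr ⟨s, hASS s hs, rfl⟩) u (Or.inl (hAS'S' u hu))
  have hdU'B : Disjoint (⋃ s ∈ SXof π' D' X, (π' s).verts) (⋃ s ∈ SXof π D X, s.verts) := by
    rw [Set.disjoint_iUnion₂_left]
    intro s hs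
    rw [Set.disjoint_iUnion₂_right]
    intro u hu
    exact (hdisj u (Or.inl (hASS u hu)) (π' s) (Or.inr ⟨s, hAS'S' s hs, rfl⟩)).symm
  have hdUB'e : Disjoint (⋃ s ∈ SXof π D X, (π s).edges) (⋃ s ∈ SXof π' D' X, s.edges) := by
    refine edge_disjoint_of_verts ?_ ?_ hdUB'
    · intro e he
      obtain ⟨s, hs, hes⟩ := Set.mem_iUnion₂.1 he
      exact ⟨((π s).edge_sub e hes).trans
        (Set.subset_biUnion_of_mem (u := fun s => (π s).verts) hs), (π s).edge_nonempty e hes⟩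
    · intro e he
      obtain ⟨s, hs, hes⟩ := Set.mem_iUnion₂.1 he
      exact (s.edge_sub e hes).trans (Set.subset_biUnion_of_mem hs)
  have hdU'Be : Disjoint (⋃ s ∈ SXof π' D' X, (π' s).edges) (⋃ s ∈ SXof π D X, s.edges) := by
    refine edge_disjoint_of_verts ?_ ?_ hdU'B
    · intro e he
      obtain ⟨s, hs, hes⟩ := Set.mem_iUnion₂.1 he
      exact ⟨((π' s).edge_sub e hes).trans
        (Set.subset_biUnion_of_mem (u := fun s => (π' s).verts) hs), (π' s).edge_nonempty e hes⟩
    · intro e he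
      obtain ⟨s, hs, hes⟩ := Set.mem_iUnion₂.1 he
      exact (s.edge_sub e hes).trans (Set.subset_biUnion_of_mem hs)
  refine hg_ext ?_ ?_
  · rw [hform1, hform2, dSum_verts, dSum_verts, hd1v, hd2v, hU'v, hUv, hB'v, hBv,
      keyX.1, keyX'.1]
    exact set_shuffle hdUB' hdU'B
  · rw [hform1, hform2, dSum_edges, dSum_edges, hd1e, hd2e, hU'e, hUe, hB'e, hBe,
      keyX.2.1, keyX'.2.1]
    exact set_shuffle hdUB'e hdU'Be
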